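/- (Invertibility Lemma) Let F be a field, a₁,…,a_m ∈ Mₙ(F) such that the linear span of {a₁,…,a_m} contains an invertible matrix, and let S be a finite nonempty subset of F. If α₁,…,α_m are chosen uniformly and independently from S, then the probability that α₁a₁ + ⋯ + α_m a_m is invertible is at least 1 − n/|S|. -/

import Mathlib

open scoped Classical

open Finset MvPolynomial in
theorem sz_aux (F : Type*) [Field F] [DecidableEq F] (S : Finset F) :
    ∀ (m : ℕ) (p : MvPolynomial (Fin m) F), p ≠ 0 →
    ((Fintype.piFinset fun _ : Fin m => S).filter
        (fun α : Fin m → F => MvPolynomial.eval α p = 0)).card * S.card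
      ≤ p.totalDegree * S.card ^ m := by
  intro m
  induction m with
  | zero =>
    intro p hp
    obtain ⟨c, rfl⟩ := MvPolynomial.C_surjective (Fin 0) p
    have hc : c ≠ 0 := fun h => hp (by simp [h])
    have : ((Fintype.piFinset fun _ : Fin 0 => S).filter
        (fun α : Fin 0 → F => MvPolynomial.eval α (C c) = 0)) = ∅ := by
      apply Finset.filter_false_of_mem
      intro α _
      simpa using hc
    simp only [this, Finset.card_empty, Nat.zero_mul]
    exact Nat.zero_le _
  | succ m ih =>
    intro p hp
    set q := MvPolynomial.finSuccEquiv F m p with hqdef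
    have hq0 : q ≠ 0 := by
      simp only [hqdef, ne_eq, EmbeddingLike.map_eq_zero_iff]
      exact hp
    set d := q.natDegree with hd
    set pd := q.coeff d with hpddef
    have hpd0 : pd ≠ 0 := by
      exact Polynomial.leadingCoeff_ne_zero.mpr hq0
    have hdeg : pd.totalDegree + d ≤ p.totalDegree :=
      MvPolynomial.totalDegree_coeff_finSuccEquiv_add_le p d hpd0
    set Z := (Fintype.piFinset fun _ : Fin (m+1) => S).filter
        (fun α : Fin (m+1) → F => MvPolynomial.eval α p = 0) with hZ
    set B := (Fintype.piFinset fun _ : Fin m => S).filter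
        (fun α' : Fin m → F => MvPolynomial.eval α' pd = 0) with hB
    set Zb := Z.filter (fun α => MvPolynomial.eval (Fin.tail α) pd = 0) with hZb
    set Zg := Z.filter (fun α => ¬ MvPolynomial.eval (Fin.tail α) pd = 0) with hZg
    have hsplit : Zb.card + Zg.card = Z.card := Finset.card_filter_add_card_filter_not _
    -- injectivity of α ↦ α 0 on tail-fibers
    have hinj : ∀ (W : Finset (Fin (m+1) → F)) (b : Fin m → F),
        Set.InjOn (fun α : Fin (m+1) → F => α 0) (W.filter (fun α => Fin.tail α = b)) := by
      intro W b α hα β hβ h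
      simp only [Finset.coe_filter, Set.mem_setOf_eq] at hα hβ
      have := hα.2.trans hβ.2.symm
      funext i
      refine Fin.cases ?_ ?_ i
      · exact h
      · intro j; exact congrFun this j
    -- bound on Zb
    have hZb_le : Zb.card ≤ S.card * B.card := by
      apply Finset.card_le_mul_card_image_of_maps_to (f := fun α : Fin (m+1) → F => Fin.tail α) (t := B)
      · intro α hα
        simp only [hZb, hZ, Finset.mem_filter, Fintype.mem_piFinset] at hα
        simp only [hB, Finset.mem_filter, Fintype.mem_piFinset]
        exact ⟨fun i => hα.1.1 _, hα.2⟩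
      · intro b _
        apply Finset.card_le_card_of_injOn (fun α => α 0) ?_ (hinj Zb b)
        intro α hα
        simp only [Finset.mem_coe, Finset.mem_filter, hZb, hZ, Fintype.mem_piFinset] at hα
        exact hα.1.1.1 0
    -- bound on Zg
    have hZg_le : Zg.card ≤ d * S.card ^ m := by
      have : Zg.card ≤ d * (Fintype.piFinset fun _ : Fin m => S).card := by
        apply Finset.card_le_mul_card_image_of_maps_to (f := fun α : Fin (m+1) → F => Fin.tail α)
        · intro α hα
          simp only [hZg, hZ, Finset.mem_filter, Fintype.mem_piFinset] at hα
          simp only [Fintype.mem_piFinset]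
          exact fun i => hα.1.1 _
        · intro b _
          by_cases hb : MvPolynomial.eval b pd = 0
          · have : Zg.filter (fun α => Fin.tail α = b) = ∅ := by
              apply Finset.filter_false_of_mem
              intro α hα hc
              simp only [hZg, Finset.mem_filter] at hα
              exact hα.2 (hc ▸ hb)
            simp [this]
          · set r : Polynomial F := q.map (MvPolynomial.eval b) with hr
            have hr0 : r ≠ 0 := by
              intro h
              apply hb
              have : r.coeff d = 0 := by rw [h]; simp
              rw [hr, Polynomial.coeff_map] at this
              exact this
            apply le_trans (Finset.card_le_card_of_injOn (fun α => α 0) ?_ (hinj Zg b))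
            · calc r.roots.toFinset.card ≤ Multiset.card r.roots := r.roots.toFinset_card_le
                _ ≤ r.natDegree := r.card_roots'
                _ ≤ d := Polynomial.natDegree_map_le
            · intro α hα
              have hα' : α ∈ Zg ∧ Fin.tail α = b := by
                simpa [Finset.mem_filter] using hα
              obtain ⟨hαZ, htail⟩ := hα'
              simp only [hZg, hZ, Finset.mem_filter] at hαZ
              have heval : MvPolynomial.eval α p = 0 := hαZ.1.2
              have hcons : (Fin.cons (α 0) (Fin.tail α) : Fin (m+1) → F) = α :=
                Fin.cons_self_tail α
              rw [← hcons, MvPolynomial.eval_eq_eval_mv_eval'] at heval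
              simp only [Finset.mem_coe, Multiset.mem_toFinset]
              rw [Polynomial.mem_roots hr0]
              rw [htail] at heval
              exact heval
      calc Zg.card ≤ d * (Fintype.piFinset fun _ : Fin m => S).card := this
        _ = d * S.card ^ m := by rw [Fintype.card_piFinset_const]
    have hIH : B.card * S.card ≤ pd.totalDegree * S.card ^ m := ih pd hpd0
    calc Z.card * S.card = (Zb.card + Zg.card) * S.card := by rw [hsplit]
      _ = Zb.card * S.card + Zg.card * S.card := add_mul _ _ _
      _ ≤ S.card * B.card * S.card + (d * S.card ^ m) * S.card := by
          exact Nat.add_le_add (Nat.mul_le_mul_right _ hZb_le) (Nat.mul_le_mul_right _ hZg_le)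
      _ = (B.card * S.card) * S.card + d * S.card ^ (m+1) := by ring
      _ ≤ (pd.totalDegree * S.card ^ m) * S.card + d * S.card ^ (m+1) := by
          exact Nat.add_le_add_right (Nat.mul_le_mul_right _ hIH) _
      _ = (pd.totalDegree + d) * S.card ^ (m+1) := by ring
      _ ≤ p.totalDegree * S.card ^ (m+1) := Nat.mul_le_mul_right _ hdeg

open Finset MvPolynomial in
theorem invertibility_lemma (F : Type*) [Field F] [DecidableEq F] (m n : ℕ)
    (a : Fin m → Matrix (Fin n) (Fin n) F)
    (hinv : ∃ A ∈ Submodule.span F (Set.range a), IsUnit A)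
    (S : Finset F) (hS : S.Nonempty) :
    (1 : ℝ) - (n : ℝ) / (S.card : ℝ) ≤
      ((Fintype.piFinset fun _ : Fin m => S).filter
          (fun α : Fin m → F => IsUnit (∑ i, α i • a i))).card /
        ((Fintype.piFinset fun _ : Fin m => S).card : ℝ) := by
  -- the determinant polynomial
  set P : MvPolynomial (Fin m) F :=
    (Matrix.of fun i j : Fin n => ∑ k, (X k : MvPolynomial (Fin m) F) * C (a k i j)).det with hP
  -- evaluation
  have heval : ∀ α : Fin m → F, MvPolynomial.eval α P = (∑ i, α i • a i).det := by
    intro α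
    rw [hP, RingHom.map_det]
    congr 1
    ext i j
    simp [Matrix.map, Matrix.sum_apply, Matrix.smul_apply, map_sum]
  -- total degree
  have hdeg : P.totalDegree ≤ n := by
    rw [hP, Matrix.det_apply]
    apply (MvPolynomial.totalDegree_finset_sum _ _).trans
    apply Finset.sup_le
    intro σ _
    have hsmul : Equiv.Perm.sign σ • ∏ i, (Matrix.of fun i j : Fin n =>
          ∑ k, (X k : MvPolynomial (Fin m) F) * C (a k i j)) (σ i) i =
        ((Equiv.Perm.sign σ : ℤ) : MvPolynomial (Fin m) F) *
          ∏ i, (Matrix.of fun i j : Fin n =>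
          ∑ k, (X k : MvPolynomial (Fin m) F) * C (a k i j)) (σ i) i := by
      rw [Units.smul_def, zsmul_eq_mul]
    rw [hsmul]
    apply (MvPolynomial.totalDegree_mul _ _).trans
    have h1 : (((Equiv.Perm.sign σ : ℤ) : MvPolynomial (Fin m) F)).totalDegree = 0 := by
      rw [← map_intCast (C : F →+* MvPolynomial (Fin m) F)]
      exact MvPolynomial.totalDegree_C _
    rw [h1, zero_add]
    apply (MvPolynomial.totalDegree_finset_prod _ _).trans
    calc ∑ i, ((Matrix.of fun i j : Fin n =>
            ∑ k, (X k : MvPolynomial (Fin m) F) * C (a k i j)) (σ i) i).totalDegree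
        ≤ ∑ _i : Fin n, 1 := by
          apply Finset.sum_le_sum
          intro i _
          rw [Matrix.of_apply]
          apply (MvPolynomial.totalDegree_finset_sum _ _).trans
          apply Finset.sup_le
          intro k _
          apply (MvPolynomial.totalDegree_mul _ _).trans
          simp [MvPolynomial.totalDegree_X, MvPolynomial.totalDegree_C]
      _ = n := by simp
  -- nonvanishing
  have hP0 : P ≠ 0 := by
    obtain ⟨A, hA, hU⟩ := hinv
    obtain ⟨c, hc⟩ := (Submodule.mem_span_range_iff_exists_fun F).mp hA
    intro h
    have := heval c
    rw [h, map_zero, hc] at this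
    exact (Matrix.isUnit_iff_isUnit_det A).mp hU |>.ne_zero this.symm
  -- counting
  have hsz := sz_aux F S m P hP0
  set N := (Fintype.piFinset fun _ : Fin m => S).card with hN
  have hNcard : N = S.card ^ m := by rw [hN, Fintype.card_piFinset_const]
  set Zc := ((Fintype.piFinset fun _ : Fin m => S).filter
      (fun α : Fin m → F => MvPolynomial.eval α P = 0)).card with hZc
  have hfilter : (Fintype.piFinset fun _ : Fin m => S).filter
      (fun α : Fin m → F => IsUnit (∑ i, α i • a i)) =
      (Fintype.piFinset fun _ : Fin m => S).filter
      (fun α : Fin m → F => ¬ MvPolynomial.eval α P = 0) := by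
    apply Finset.filter_congr
    intro α _
    simp only [heval α, Matrix.isUnit_iff_isUnit_det, isUnit_iff_ne_zero, eq_iff_iff, ne_eq]
  have hGZ : ((Fintype.piFinset fun _ : Fin m => S).filter
      (fun α : Fin m → F => IsUnit (∑ i, α i • a i))).card + Zc = N := by
    rw [hfilter, hZc, hN, add_comm]
    exact Finset.card_filter_add_card_filter_not _
  have hs0 : (0:ℝ) < (S.card : ℝ) := by
    exact_mod_cast Finset.card_pos.mpr hS
  have hN0 : (0:ℝ) < (N : ℝ) := by
    have : 0 < N := by rw [hNcard]; positivity
    exact_mod_cast this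
  have key : (Zc : ℝ) * (S.card : ℝ) ≤ (n : ℝ) * (N : ℝ) := by
    have h1 : Zc * S.card ≤ n * N := by
      calc Zc * S.card ≤ P.totalDegree * S.card ^ m := hsz
        _ ≤ n * S.card ^ m := Nat.mul_le_mul_right _ hdeg
        _ = n * N := by rw [hNcard]
    exact_mod_cast h1
  have hG : (((Fintype.piFinset fun _ : Fin m => S).filter
      (fun α : Fin m → F => IsUnit (∑ i, α i • a i))).card : ℝ) = (N : ℝ) - (Zc : ℝ) := by
    have := hGZ
    push_cast [← this]
    ring
  rw [hG, sub_div, div_self hN0.ne']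
  have : (Zc : ℝ) / (N : ℝ) ≤ (n : ℝ) / (S.card : ℝ) := by
    rw [div_le_div_iff₀ hN0 hs0]
    linarith [key]
  linarith [this]
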